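/- Let 1 ≤ k ≤ n and let j be a positive divisor of n. Then the j-th cyclotomic polynomial Φ_j(q) divides the Gaussian binomial coefficient binom(n,k)_q in ℤ[q] if and only if j does not divide k. -/

import Mathlib

open Polynomial Finset

/-- Numerator of the Gaussian binomial coefficient: `∏_{i=0}^{k-1} (1 - q^{n-i})`. -/
noncomputable def gaussNum (n k : ℕ) : Polynomial ℤ :=
  ∏ i ∈ Finset.range k, (1 - X ^ (n - i))

/-- Denominator of the Gaussian binomial coefficient: `∏_{i=1}^{k} (1 - q^i)`. -/
noncomputable def gaussDen (k : ℕ) : Polynomial ℤ :=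
  ∏ i ∈ Finset.range k, (1 - X ^ (i + 1))

/-- For `1 ≤ k ≤ n` and a positive divisor `j` of `n`, the cyclotomic polynomial
`Φ_j(q)` divides the Gaussian binomial coefficient `binom(n,k)_q` iff `j ∤ k`. -/
theorem cyclotomic_dvd_gaussian_binomial_iff (n k j : ℕ) (hk1 : 1 ≤ k) (hkn : k ≤ n)
    (hj : 0 < j) (hjn : j ∣ n) (P : Polynomial ℤ) (hP : P * gaussDen k = gaussNum n k) :
    cyclotomic j ℤ ∣ P ↔ ¬ j ∣ k := by
  classical
  set p : Polynomial ℤ := cyclotomic j ℤ with hpdef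
  have hirr : Irreducible p := cyclotomic.irreducible hj
  have hp : Prime p := hirr.prime
  -- multiplicity of p in (1 - X^m) for m > 0
  have key : ∀ m : ℕ, 0 < m →
      emultiplicity p (1 - X ^ m : Polynomial ℤ) = if j ∣ m then 1 else 0 := by
    intro m hm
    have h1 : (1 - X ^ m : Polynomial ℤ) = -(X ^ m - 1) := by ring
    rw [h1, emultiplicity_neg, ← prod_cyclotomic_eq_X_pow_sub_one hm,
      Finset.emultiplicity_prod hp]
    have hterm : ∀ d ∈ m.divisors,
        emultiplicity p (cyclotomic d ℤ) = if d = j then 1 else 0 := by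
      intro d hd
      have hd0 : 0 < d := Nat.pos_of_mem_divisors hd
      by_cases hdj : d = j
      · subst hdj
        rw [if_pos rfl]
        have hfin : FiniteMultiplicity p p := by
          refine ⟨1, fun h => ?_⟩
          have : p ∣ 1 := by
            have h2 : p * p ∣ p * 1 := by simpa [pow_succ, pow_one, mul_one] using h
            exact (mul_dvd_mul_iff_left hp.ne_zero).mp h2
          exact hp.not_unit (isUnit_of_dvd_one this)
        exact hfin.emultiplicity_self
      · rw [if_neg hdj, emultiplicity_eq_zero]
        intro hdvd
        have hassoc : Associated p (cyclotomic d ℤ) :=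
          hirr.associated_of_dvd (cyclotomic.irreducible hd0) hdvd
        have := Polynomial.eq_of_monic_of_associated (cyclotomic.monic j ℤ)
          (cyclotomic.monic d ℤ) hassoc
        exact hdj (cyclotomic_injective (R := ℤ) this.symm)
    rw [Finset.sum_congr rfl hterm]
    by_cases hjm : j ∣ m
    · rw [if_pos hjm, Finset.sum_ite_eq' m.divisors j (fun _ => (1 : ℕ∞)),
        if_pos (Nat.mem_divisors.mpr ⟨hjm, hm.ne'⟩)]
    · rw [if_neg hjm]
      apply Finset.sum_eq_zero
      intro d hd
      rw [if_neg]
      rintro rfl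
      exact hjm (Nat.dvd_of_mem_divisors hd)
  -- numerator multiplicity
  have hnum : emultiplicity p (gaussNum n k) = (((range k).filter (fun i => j ∣ i)).card : ℕ∞) := by
    rw [gaussNum, Finset.emultiplicity_prod hp, ← Finset.sum_boole]
    apply Finset.sum_congr rfl
    intro i hi
    have hik : i < k := Finset.mem_range.mp hi
    have hin : i ≤ n := le_trans (le_of_lt hik) hkn
    have hpos : 0 < n - i := by omega
    rw [key _ hpos]
    have : j ∣ n - i ↔ j ∣ i := by
      constructor
      · intro h
        have := Nat.dvd_sub hjn h
        rwa [Nat.sub_sub_self hin] at this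
      · intro h
        exact Nat.dvd_sub hjn h
    simp [this]
  have hden : emultiplicity p (gaussDen k) = (((range k).filter (fun i => j ∣ i + 1)).card : ℕ∞) := by
    rw [gaussDen, Finset.emultiplicity_prod hp, ← Finset.sum_boole]
    apply Finset.sum_congr rfl
    intro i _
    rw [key _ (Nat.succ_pos i)]
  -- card computations
  have hB : ((range k).filter (fun i => j ∣ i + 1)).card = k / j := Nat.card_multiples k j
  have hA : ((range k).filter (fun i => j ∣ i)).card = (k - 1) / j + 1 := by
    have hset : (range k).filter (fun i => j ∣ i)
        = insert 0 ((Ioc 0 (k - 1)).filter (fun i => j ∣ i)) := by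
      ext i
      simp only [Finset.mem_filter, Finset.mem_range, Finset.mem_insert, Finset.mem_Ioc]
      constructor
      · rintro ⟨hik, hdvd⟩
        rcases Nat.eq_zero_or_pos i with rfl | hi0
        · exact Or.inl rfl
        · exact Or.inr ⟨⟨hi0, by omega⟩, hdvd⟩
      · rintro (rfl | ⟨⟨hi0, hik⟩, hdvd⟩)
        · exact ⟨hk1, dvd_zero j⟩
        · exact ⟨by omega, hdvd⟩
    rw [hset, Finset.card_insert_of_notMem (by simp), Nat.Ioc_filter_dvd_card_eq_div]
  have hsucc : k / j = (k - 1) / j + if j ∣ k then 1 else 0 := by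
    conv_lhs => rw [show k = (k - 1) + 1 by omega]
    rw [Nat.succ_div, show k - 1 + 1 = k by omega]
  -- combine
  have hmul : emultiplicity p P + ((k / j : ℕ) : ℕ∞) = (((k - 1) / j + 1 : ℕ) : ℕ∞) := by
    rw [← hB, ← hden, ← hA, ← hnum, ← emultiplicity_mul hp, hP]
  rw [← not_not (a := cyclotomic j ℤ ∣ P), ← emultiplicity_eq_zero, ← hpdef]
  by_cases hjk : j ∣ k
  · rw [hsucc, if_pos hjk] at hmul
    have : emultiplicity p P = 0 :=
      WithTop.add_right_cancel (z := (((k - 1) / j + 1 : ℕ) : ℕ∞)) (ENat.coe_ne_top _) (hmul.trans (zero_add _).symm)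
    simp [this, hjk]
  · rw [hsucc, if_neg hjk, add_zero] at hmul
    have h1 : emultiplicity p P = 1 := by
      have : emultiplicity p P + (((k-1)/j : ℕ) : ℕ∞) = 1 + (((k-1)/j : ℕ) : ℕ∞) := by
        rw [hmul]; push_cast; ring
      exact WithTop.add_right_cancel (ENat.coe_ne_top _) this
    simp [h1, hjk]
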